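/- Let G be a simple graph on a finite vertex type V. Then the number of acyclic orientations of G is at most the product over all vertices v ∈ V of (deg(v) + 1), where deg(v) is the degree of v in G. -/

import Mathlib

open Finset
open scoped Classical

/-- Out-degree of a relation at a vertex. -/
private noncomputable def OutD {V : Type*} [Fintype V] (r : V → V → Prop) (v : V) : ℕ :=
  (Finset.univ.filter fun w => r v w).card

private lemma outD_le {V : Type*} [Fintype V] [DecidableEq V]
    (G : SimpleGraph V) [DecidableRel G.Adj] (r : V → V → Prop)
    (hr1 : ∀ i j, r i j → G.Adj i j) (v : V) : OutD r v ≤ G.degree v := by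
  rw [← SimpleGraph.card_neighborFinset_eq_degree]
  apply Finset.card_le_card
  intro w hw
  rw [SimpleGraph.mem_neighborFinset]
  exact hr1 v w (by simpa [OutD] using hw)

private lemma mono_of_outD_eq {V : Type*} [Fintype V] [DecidableEq V]
    (G : SimpleGraph V) [DecidableRel G.Adj]
    (r s : V → V → Prop)
    (hr1 : ∀ i j, r i j → G.Adj i j)
    (hr2 : ∀ i j, G.Adj i j → Xor' (r i j) (r j i))
    (hr3 : Irreflexive (Relation.TransGen r))
    (hs1 : ∀ i j, s i j → G.Adj i j)
    (hs2 : ∀ i j, G.Adj i j → Xor' (s i j) (s j i))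
    (hout : ∀ v, OutD r v = OutD s v) :
    ∀ i j, r i j → s i j := by
  by_contra h
  push_neg at h
  obtain ⟨i, j, hrij, hsij⟩ := h
  set D : V → V → Prop := fun a b => r a b ∧ s b a with hD
  have hDij : D i j :=
    ⟨hrij, ((hs2 i j (hr1 i j hrij)).resolve_left (fun hh => hsij hh.1)).1⟩
  -- counting claim : out-degree = in-degree in the difference digraph
  have hcount : ∀ v, (univ.filter fun w => D v w).card = (univ.filter fun w => D w v).card := by
    intro v
    have e1 : (univ.filter fun w => D v w) = (univ.filter fun w => r v w ∧ ¬ s v w) := by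
      ext w
      simp only [mem_filter, mem_univ, true_and, hD]
      constructor
      · rintro ⟨h1, h2⟩
        refine ⟨h1, fun h3 => ?_⟩
        rcases hs2 v w (hr1 v w h1) with ⟨_, h4⟩ | ⟨_, h4⟩
        · exact h4 h2
        · exact h4 h3
      · rintro ⟨h1, h2⟩
        exact ⟨h1, ((hs2 v w (hr1 v w h1)).resolve_left (fun hh => h2 hh.1)).1⟩
    have e2 : (univ.filter fun w => D w v) = (univ.filter fun w => s v w ∧ ¬ r v w) := by
      ext w
      simp only [mem_filter, mem_univ, true_and, hD]
      constructor
      · rintro ⟨h1, h2⟩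
        refine ⟨h2, fun h3 => ?_⟩
        rcases hr2 v w (hs1 v w h2) with ⟨_, h4⟩ | ⟨_, h4⟩
        · exact h4 h1
        · exact h4 h3
      · rintro ⟨h1, h2⟩
        exact ⟨((hr2 v w (hs1 v w h1)).resolve_left (fun hh => h2 hh.1)).1, h1⟩
    have hr' : (univ.filter fun w => r v w ∧ s v w).card
        + (univ.filter fun w => r v w ∧ ¬ s v w).card = OutD r v := by
      rw [OutD, ← Finset.card_filter_add_card_filter_not
        (s := univ.filter fun w => r v w) (p := fun w => s v w)]
      congr 1 <;> rw [Finset.filter_filter]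
    have hs' : (univ.filter fun w => s v w ∧ r v w).card
        + (univ.filter fun w => s v w ∧ ¬ r v w).card = OutD s v := by
      rw [OutD, ← Finset.card_filter_add_card_filter_not
        (s := univ.filter fun w => s v w) (p := fun w => r v w)]
      congr 1 <;> rw [Finset.filter_filter]
    have hAB : (univ.filter fun w => r v w ∧ s v w) = (univ.filter fun w => s v w ∧ r v w) := by
      ext w; simp [and_comm]
    rw [hAB] at hr'
    have hov := hout v
    rw [e1, e2]
    omega
  -- every vertex with an incoming difference edge has an outgoing one
  have hnext : ∀ v : V, (∃ u, D u v) → ∃ w, D v w := by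
    rintro v ⟨u, hu⟩
    have h1 : 0 < (univ.filter fun w => D w v).card :=
      Finset.card_pos.mpr ⟨u, by simpa using hu⟩
    rw [← hcount] at h1
    obtain ⟨w, hw⟩ := Finset.card_pos.mp h1
    exact ⟨w, (Finset.mem_filter.mp hw).2⟩
  -- build an infinite walk, find a repeated vertex, get a cycle
  let T := {v : V // ∃ u, D u v}
  let step : T → T := fun v =>
    ⟨Classical.choose (hnext v.1 v.2), v.1, Classical.choose_spec (hnext v.1 v.2)⟩
  have hstep : ∀ v : T, D v.1 (step v).1 := fun v => Classical.choose_spec (hnext v.1 v.2)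
  let g : ℕ → T := fun n => step^[n] ⟨j, i, hDij⟩
  have hg : ∀ n, D (g n).1 (g (n + 1)).1 := by
    intro n
    have hgs : g (n + 1) = step (g n) := by
      simp only [g, Function.iterate_succ_apply']
    rw [hgs]
    exact hstep (g n)
  have htrans : ∀ m k, Relation.TransGen D (g m).1 (g (m + k + 1)).1 := by
    intro m k
    induction k with
    | zero => exact Relation.TransGen.single (hg m)
    | succ k ih => exact ih.tail (hg (m + k + 1))
  have hcycle : ∀ a b : ℕ, a < b → g a = g b → False := by
    intro a b hab heq
    have h1 : Relation.TransGen D (g a).1 (g b).1 := by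
      have : b = a + (b - a - 1) + 1 := by omega
      rw [this]
      exact htrans a (b - a - 1)
    have h2 : Relation.TransGen r (g a).1 (g b).1 :=
      Relation.TransGen.mono (fun x y (hxy : D x y) => hxy.1) _ _ h1
    rw [heq] at h2
    exact hr3 _ h2
  obtain ⟨a, b, hab, heq⟩ := Finite.exists_ne_map_eq_of_infinite g
  rcases lt_or_gt_of_ne hab with h' | h'
  · exact hcycle a b h' heq
  · exact hcycle b a h' heq.symm

/-- The number of acyclic orientations of a simple graph `G` on a finite
vertex type is at most `∏ v, (deg v + 1)`. -/
theorem card_acyclic_orientations_le {V : Type*} [Fintype V] [DecidableEq V]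
    (G : SimpleGraph V) [DecidableRel G.Adj] :
    Nat.card {r : V → V → Prop //
        (∀ i j : V, r i j → G.Adj i j) ∧
        (∀ i j : V, G.Adj i j → Xor' (r i j) (r j i)) ∧
        Irreflexive (Relation.TransGen r)} ≤
      ∏ v : V, (G.degree v + 1) := by
  classical
  set S := {r : V → V → Prop //
      (∀ i j : V, r i j → G.Adj i j) ∧
      (∀ i j : V, G.Adj i j → Xor' (r i j) (r j i)) ∧
      Irreflexive (Relation.TransGen r)} with hS
  have key : Nat.card S ≤ Nat.card (∀ v : V, Fin (G.degree v + 1)) := by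
    apply Nat.card_le_card_of_injective
      (f := fun p v => (⟨OutD p.1 v, Nat.lt_succ_of_le (outD_le G p.1 p.2.1 v)⟩ :
        Fin (G.degree v + 1)))
    intro p q hpq
    have hout : ∀ v, OutD p.1 v = OutD q.1 v := by
      intro v
      have := congrFun hpq v
      simpa using congrArg Fin.val this
    apply Subtype.ext
    funext a b
    apply propext
    constructor
    · exact mono_of_outD_eq G p.1 q.1 p.2.1 p.2.2.1 p.2.2.2 q.2.1 q.2.2.1 hout a b
    · exact mono_of_outD_eq G q.1 p.1 q.2.1 q.2.2.1 q.2.2.2 p.2.1 p.2.2.1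
        (fun v => (hout v).symm) a b
  calc Nat.card S ≤ Nat.card (∀ v : V, Fin (G.degree v + 1)) := key
    _ = ∏ v : V, (G.degree v + 1) := by
        simp [Nat.card_eq_fintype_card, Fintype.card_pi]
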